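/- For all integers i, j, k with i − j ≡ 1 (mod 3) and k even, the following identity holds in F: Z(i−1,j+1,k+1) · Z(i,j+1,k−1) = Z(i−1,j+2,k) · Z(i,j,k) + Z(i−1,j+1,k) · Z(i,j+1,k). -/

import Mathlib

noncomputable section

open MvPolynomial

/-- The field `F = ℚ(x₁,…,x₆)` of rational functions in six indeterminates over `ℚ`. -/
abbrev F : Type := FractionRing (MvPolynomial (Fin 6) ℚ)

/-- The indeterminate `x_{r+1}` as an element of `F` (so `x 0 = x₁, …, x 5 = x₆`). -/
def x (r : Fin 6) : F := algebraMap (MvPolynomial (Fin 6) ℚ) F (X r)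

/-- `A = (x₃x₅+x₄x₆)/(x₁x₂)` -/
def A : F := (x 2 * x 4 + x 3 * x 5) / (x 0 * x 1)

/-- `B = (x₁x₆+x₂x₅)/(x₃x₄)` -/
def B : F := (x 0 * x 5 + x 1 * x 4) / (x 2 * x 3)

/-- `C = (x₁x₃+x₂x₄)/(x₅x₆)` -/
def C : F := (x 0 * x 2 + x 1 * x 3) / (x 4 * x 5)

/-- `D = (x₁x₃x₆+x₂x₃x₅+x₂x₄x₆)/(x₁x₄x₅)` -/
def D : F := (x 0 * x 2 * x 5 + x 1 * x 2 * x 4 + x 1 * x 3 * x 5) / (x 0 * x 3 * x 4)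

/-- `E = (x₂x₄x₅+x₁x₃x₅+x₁x₄x₆)/(x₂x₃x₆)` -/
def E : F := (x 1 * x 3 * x 4 + x 0 * x 2 * x 4 + x 0 * x 3 * x 5) / (x 1 * x 2 * x 5)

/-- `a(i,j) = i² + ij + j² + 1 + i + 2j` -/
def a (i j : ℤ) : ℤ := i^2 + i*j + j^2 + 1 + i + 2*j

/-- `b(i,j) = i² + ij + j² + 1 + 2i + j` -/
def b (i j : ℤ) : ℤ := i^2 + i*j + j^2 + 1 + 2*i + j

/-- `c(i,j) = i² + ij + j² + 1` -/
def c (i j : ℤ) : ℤ := i^2 + i*j + j^2 + 1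

/-- The initial cluster variable `x_{r(i,j,k)}` determined by `2(i−j)+3k mod 6`:
`r = 1` if `≡ 5`, `r = 2` if `≡ 2`, `r = 3` if `≡ 4`, `r = 4` if `≡ 1`,
`r = 5` if `≡ 3`, and `r = 6` if `≡ 0 (mod 6)`. -/
def xr (i j k : ℤ) : F :=
  if (2*(i-j) + 3*k) % 6 = 5 then x 0
  else if (2*(i-j) + 3*k) % 6 = 2 then x 1
  else if (2*(i-j) + 3*k) % 6 = 4 then x 2
  else if (2*(i-j) + 3*k) % 6 = 1 then x 3
  else if (2*(i-j) + 3*k) % 6 = 3 then x 4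
  else x 5

/-- `Z(i,j,k) = x_{r(i,j,k)} · A^{⌊a(i,j)/3⌋} · B^{⌊b(i,j)/3⌋} · C^{⌊c(i,j)/3⌋} ·
D^{⌊(k−1)²/4⌋} · E^{⌊k²/4⌋}`.  (Note `Int` division by a positive integer is floor
division.) -/
def Z (i j k : ℤ) : F :=
  xr i j k * A ^ (a i j / 3) * B ^ (b i j / 3) * C ^ (c i j / 3)
    * D ^ ((k-1)^2 / 4) * E ^ (k^2 / 4)

lemma div3' (s t r : ℤ) (h : s = 3*t+r) (h0 : 0 ≤ r) (h1 : r < 3) : s / 3 = t := by omega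

lemma div4' (s t r : ℤ) (h : s = 4*t+r) (h0 : 0 ≤ r) (h1 : r < 4) : s / 4 = t := by omega

lemma x_ne (r : Fin 6) : x r ≠ 0 := by
  unfold x
  exact (map_ne_zero_iff _ (IsFractionRing.injective (MvPolynomial (Fin 6) ℚ) F)).mpr (X_ne_zero r)

lemma alg_ne (p : MvPolynomial (Fin 6) ℚ) (h : eval (fun _ => (1:ℚ)) p ≠ 0) :
    algebraMap (MvPolynomial (Fin 6) ℚ) F p ≠ 0 := by
  intro hp
  exact h (by rw [(map_eq_zero_iff _ (IsFractionRing.injective (MvPolynomial (Fin 6) ℚ) F)).mp hp]; simp)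

lemma A_ne : A ≠ 0 := by
  unfold A
  apply div_ne_zero _ (mul_ne_zero (x_ne 0) (x_ne 1))
  have : x 2 * x 4 + x 3 * x 5 = algebraMap (MvPolynomial (Fin 6) ℚ) F (X 2 * X 4 + X 3 * X 5) := by
    simp [x, map_add, map_mul]
  rw [this]; exact alg_ne _ (by norm_num [eval_add, eval_mul, eval_X])

lemma B_ne : B ≠ 0 := by
  unfold B
  apply div_ne_zero _ (mul_ne_zero (x_ne 2) (x_ne 3))
  have : x 0 * x 5 + x 1 * x 4 = algebraMap (MvPolynomial (Fin 6) ℚ) F (X 0 * X 5 + X 1 * X 4) := by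
    simp [x, map_add, map_mul]
  rw [this]; exact alg_ne _ (by norm_num [eval_add, eval_mul, eval_X])

lemma C_ne : C ≠ 0 := by
  unfold _root_.C
  apply div_ne_zero _ (mul_ne_zero (x_ne 4) (x_ne 5))
  have : x 0 * x 2 + x 1 * x 3 = algebraMap (MvPolynomial (Fin 6) ℚ) F (X 0 * X 2 + X 1 * X 3) := by
    simp [x, map_add, map_mul]
  rw [this]; exact alg_ne _ (by norm_num [eval_add, eval_mul, eval_X])

lemma D_ne : D ≠ 0 := by
  unfold D
  apply div_ne_zero _ (mul_ne_zero (mul_ne_zero (x_ne 0) (x_ne 3)) (x_ne 4))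
  have : x 0 * x 2 * x 5 + x 1 * x 2 * x 4 + x 1 * x 3 * x 5
      = algebraMap (MvPolynomial (Fin 6) ℚ) F (X 0 * X 2 * X 5 + X 1 * X 2 * X 4 + X 1 * X 3 * X 5) := by
    simp [x, map_add, map_mul]
  rw [this]; exact alg_ne _ (by norm_num [eval_add, eval_mul, eval_X])

lemma E_ne : E ≠ 0 := by
  unfold E
  apply div_ne_zero _ (mul_ne_zero (mul_ne_zero (x_ne 1) (x_ne 2)) (x_ne 5))
  have : x 1 * x 3 * x 4 + x 0 * x 2 * x 4 + x 0 * x 3 * x 5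
      = algebraMap (MvPolynomial (Fin 6) ℚ) F (X 1 * X 3 * X 4 + X 0 * X 2 * X 4 + X 0 * X 3 * X 5) := by
    simp [x, map_add, map_mul]
  rw [this]; exact alg_ne _ (by norm_num [eval_add, eval_mul, eval_X])

lemma base_id : x 3 * x 4 * D = x 1 * x 1 * A + x 2 * x 5 := by
  unfold A D
  have h1 : x 0 * x 3 * x 4 ≠ 0 := mul_ne_zero (mul_ne_zero (x_ne 0) (x_ne 3)) (x_ne 4)
  have h2 : x 0 * x 1 ≠ 0 := mul_ne_zero (x_ne 0) (x_ne 1)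
  have h0 := x_ne 0; have h3 := x_ne 3; have h4 := x_ne 4; have h5 := x_ne 1
  field_simp
  ring

lemma merge (u v : F) (a1 b1 c1 d1 e1 a2 b2 c2 d2 e2 : ℤ) :
    (u * A^a1 * B^b1 * _root_.C^c1 * D^d1 * E^e1) * (v * A^a2 * B^b2 * _root_.C^c2 * D^d2 * E^e2)
      = (u*v) * A^(a1+a2) * B^(b1+b2) * _root_.C^(c1+c2) * D^(d1+d2) * E^(e1+e2) := by
  rw [zpow_add₀ A_ne, zpow_add₀ B_ne, zpow_add₀ C_ne, zpow_add₀ D_ne, zpow_add₀ E_ne]; ring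

lemma key (α β γ δ ε : ℤ) :
    (x 3 * x 4) * A^α * B^β * _root_.C^γ * D^(δ+1) * E^ε
      = (x 1 * x 1) * A^(α+1) * B^β * _root_.C^γ * D^δ * E^ε
        + (x 2 * x 5) * A^α * B^β * _root_.C^γ * D^δ * E^ε := by
  rw [zpow_add₀ D_ne, zpow_add₀ A_ne, zpow_one, zpow_one]
  linear_combination (A^α * B^β * _root_.C^γ * D^δ * E^ε) * base_id

/-- For `i − j ≡ 1 (mod 3)` and `k` even:
`Z(i−1,j+1,k+1)·Z(i,j+1,k−1) = Z(i−1,j+2,k)·Z(i,j,k) + Z(i−1,j+1,k)·Z(i,j+1,k)`. -/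
theorem stmt_15 (i j k : ℤ) (h3 : (i - j) % 3 = 1) (h2 : Even k) :
    Z (i-1) (j+1) (k+1) * Z i (j+1) (k-1)
      = Z (i-1) (j+2) k * Z i j k + Z (i-1) (j+1) k * Z i (j+1) k := by
  obtain ⟨m, hm⟩ : ∃ m, i = j + 1 + 3*m := ⟨(i-j)/3, by omega⟩
  obtain ⟨n, hn⟩ : ∃ n, k = 2*n := ⟨k/2, by obtain ⟨t, ht⟩ := h2; omega⟩
  subst hm hn
  have hZ1 : Z (j+1+3*m-1) (j+1) (2*n+1)
      = x 3 * A^(j^2+3*m*j+3*m^2+2*j+2*m+1) * B^(j^2+3*m*j+3*m^2+2*j+3*m+1)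
          * _root_.C^(j^2+3*m*j+3*m^2+j+m) * D^(n^2) * E^(n^2+n) := by
    have hr : (2*(j+1+3*m-1-(j+1)) + 3*(2*n+1)) % 6 = 1 := by omega
    have da : a (j+1+3*m-1) (j+1) / 3 = j^2+3*m*j+3*m^2+2*j+2*m+1 :=
      div3' _ _ 1 (by unfold a; ring) (by norm_num) (by norm_num)
    have db : b (j+1+3*m-1) (j+1) / 3 = j^2+3*m*j+3*m^2+2*j+3*m+1 :=
      div3' _ _ 0 (by unfold b; ring) (by norm_num) (by norm_num)
    have dc : c (j+1+3*m-1) (j+1) / 3 = j^2+3*m*j+3*m^2+j+m :=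
      div3' _ _ 2 (by unfold c; ring) (by norm_num) (by norm_num)
    have dd : ((2*n+1:ℤ)-1)^2 / 4 = n^2 := div4' _ _ 0 (by ring) (by norm_num) (by norm_num)
    have de : ((2*n+1:ℤ))^2 / 4 = n^2+n := div4' _ _ 1 (by ring) (by norm_num) (by norm_num)
    simp only [Z, xr, hr, da, db, dc, dd, de]
    norm_num
  have hZ2 : Z (j+1+3*m) (j+1) (2*n-1)
      = x 4 * A^(j^2+3*m*j+3*m^2+3*j+4*m+2) * B^(j^2+3*m*j+3*m^2+3*j+5*m+2)
          * _root_.C^(j^2+3*m*j+3*m^2+2*j+3*m+1) * D^((n-1)^2) * E^(n^2-n) := by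
    have hr : (2*(j+1+3*m-(j+1)) + 3*(2*n-1)) % 6 = 3 := by omega
    have da : a (j+1+3*m) (j+1) / 3 = j^2+3*m*j+3*m^2+3*j+4*m+2 :=
      div3' _ _ 1 (by unfold a; ring) (by norm_num) (by norm_num)
    have db : b (j+1+3*m) (j+1) / 3 = j^2+3*m*j+3*m^2+3*j+5*m+2 :=
      div3' _ _ 1 (by unfold b; ring) (by norm_num) (by norm_num)
    have dc : c (j+1+3*m) (j+1) / 3 = j^2+3*m*j+3*m^2+2*j+3*m+1 :=
      div3' _ _ 1 (by unfold c; ring) (by norm_num) (by norm_num)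
    have dd : ((2*n-1:ℤ)-1)^2 / 4 = (n-1)^2 := div4' _ _ 0 (by ring) (by norm_num) (by norm_num)
    have de : ((2*n-1:ℤ))^2 / 4 = n^2-n := div4' _ _ 1 (by ring) (by norm_num) (by norm_num)
    simp only [Z, xr, hr, da, db, dc, dd, de]
    norm_num
  have hZ3 : Z (j+1+3*m-1) (j+2) (2*n)
      = x 1 * A^(j^2+3*m*j+3*m^2+3*j+3*m+3) * B^(j^2+3*m*j+3*m^2+3*j+4*m+2)
          * _root_.C^(j^2+3*m*j+3*m^2+2*j+2*m+1) * D^(n^2-n) * E^(n^2) := by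
    have hr : (2*(j+1+3*m-1-(j+2)) + 3*(2*n)) % 6 = 2 := by omega
    have da : a (j+1+3*m-1) (j+2) / 3 = j^2+3*m*j+3*m^2+3*j+3*m+3 :=
      div3' _ _ 0 (by unfold a; ring) (by norm_num) (by norm_num)
    have db : b (j+1+3*m-1) (j+2) / 3 = j^2+3*m*j+3*m^2+3*j+4*m+2 :=
      div3' _ _ 1 (by unfold b; ring) (by norm_num) (by norm_num)
    have dc : c (j+1+3*m-1) (j+2) / 3 = j^2+3*m*j+3*m^2+2*j+2*m+1 :=
      div3' _ _ 2 (by unfold c; ring) (by norm_num) (by norm_num)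
    have dd : ((2*n:ℤ)-1)^2 / 4 = n^2-n := div4' _ _ 1 (by ring) (by norm_num) (by norm_num)
    have de : ((2*n:ℤ))^2 / 4 = n^2 := div4' _ _ 0 (by ring) (by norm_num) (by norm_num)
    simp only [Z, xr, hr, da, db, dc, dd, de]
    norm_num
  have hZ4 : Z (j+1+3*m) j (2*n)
      = x 1 * A^(j^2+3*m*j+3*m^2+2*j+3*m+1) * B^(j^2+3*m*j+3*m^2+2*j+4*m+1)
          * _root_.C^(j^2+3*m*j+3*m^2+j+2*m) * D^(n^2-n) * E^(n^2) := by
    have hr : (2*(j+1+3*m-j) + 3*(2*n)) % 6 = 2 := by omega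
    have da : a (j+1+3*m) j / 3 = j^2+3*m*j+3*m^2+2*j+3*m+1 :=
      div3' _ _ 0 (by unfold a; ring) (by norm_num) (by norm_num)
    have db : b (j+1+3*m) j / 3 = j^2+3*m*j+3*m^2+2*j+4*m+1 :=
      div3' _ _ 1 (by unfold b; ring) (by norm_num) (by norm_num)
    have dc : c (j+1+3*m) j / 3 = j^2+3*m*j+3*m^2+j+2*m :=
      div3' _ _ 2 (by unfold c; ring) (by norm_num) (by norm_num)
    have dd : ((2*n:ℤ)-1)^2 / 4 = n^2-n := div4' _ _ 1 (by ring) (by norm_num) (by norm_num)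
    have de : ((2*n:ℤ))^2 / 4 = n^2 := div4' _ _ 0 (by ring) (by norm_num) (by norm_num)
    simp only [Z, xr, hr, da, db, dc, dd, de]
    norm_num
  have hZ5 : Z (j+1+3*m-1) (j+1) (2*n)
      = x 2 * A^(j^2+3*m*j+3*m^2+2*j+2*m+1) * B^(j^2+3*m*j+3*m^2+2*j+3*m+1)
          * _root_.C^(j^2+3*m*j+3*m^2+j+m) * D^(n^2-n) * E^(n^2) := by
    have hr : (2*(j+1+3*m-1-(j+1)) + 3*(2*n)) % 6 = 4 := by omega
    have da : a (j+1+3*m-1) (j+1) / 3 = j^2+3*m*j+3*m^2+2*j+2*m+1 :=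
      div3' _ _ 1 (by unfold a; ring) (by norm_num) (by norm_num)
    have db : b (j+1+3*m-1) (j+1) / 3 = j^2+3*m*j+3*m^2+2*j+3*m+1 :=
      div3' _ _ 0 (by unfold b; ring) (by norm_num) (by norm_num)
    have dc : c (j+1+3*m-1) (j+1) / 3 = j^2+3*m*j+3*m^2+j+m :=
      div3' _ _ 2 (by unfold c; ring) (by norm_num) (by norm_num)
    have dd : ((2*n:ℤ)-1)^2 / 4 = n^2-n := div4' _ _ 1 (by ring) (by norm_num) (by norm_num)
    have de : ((2*n:ℤ))^2 / 4 = n^2 := div4' _ _ 0 (by ring) (by norm_num) (by norm_num)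
    simp only [Z, xr, hr, da, db, dc, dd, de]
    norm_num
  have hZ6 : Z (j+1+3*m) (j+1) (2*n)
      = x 5 * A^(j^2+3*m*j+3*m^2+3*j+4*m+2) * B^(j^2+3*m*j+3*m^2+3*j+5*m+2)
          * _root_.C^(j^2+3*m*j+3*m^2+2*j+3*m+1) * D^(n^2-n) * E^(n^2) := by
    have hr : (2*(j+1+3*m-(j+1)) + 3*(2*n)) % 6 = 0 := by omega
    have da : a (j+1+3*m) (j+1) / 3 = j^2+3*m*j+3*m^2+3*j+4*m+2 :=
      div3' _ _ 1 (by unfold a; ring) (by norm_num) (by norm_num)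
    have db : b (j+1+3*m) (j+1) / 3 = j^2+3*m*j+3*m^2+3*j+5*m+2 :=
      div3' _ _ 1 (by unfold b; ring) (by norm_num) (by norm_num)
    have dc : c (j+1+3*m) (j+1) / 3 = j^2+3*m*j+3*m^2+2*j+3*m+1 :=
      div3' _ _ 1 (by unfold c; ring) (by norm_num) (by norm_num)
    have dd : ((2*n:ℤ)-1)^2 / 4 = n^2-n := div4' _ _ 1 (by ring) (by norm_num) (by norm_num)
    have de : ((2*n:ℤ))^2 / 4 = n^2 := div4' _ _ 0 (by ring) (by norm_num) (by norm_num)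
    simp only [Z, xr, hr, da, db, dc, dd, de]
    norm_num
  rw [hZ1, hZ2, hZ3, hZ4, hZ5, hZ6, merge, merge, merge]
  convert key (2*(j^2+3*m*j+3*m^2)+5*j+6*m+3) (2*(j^2+3*m*j+3*m^2)+5*j+8*m+3)
    (2*(j^2+3*m*j+3*m^2)+3*j+4*m+1) (2*n^2-2*n) (2*n^2) using 2 <;> ring
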